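/- In a modular lattice, suppose d ≤ a ≤ x ≤ b ≤ c, and suppose y is a local (d,c)-complement of x, i.e. d ≤ y ≤ c, x ⊓ y = d, and x ⊔ y = c. Then the element y' := a ⊔ (y ⊓ b) lies in the interval [a,b] and is a local (a,b)-complement of x, i.e. x ⊓ y' = a and x ⊔ y' = b. (If an interval of a modular lattice has local complements, then all its subintervals also have them, and the subinterval complement is obtained by the formula x^a_b = a ⊔ (x^d_c ⊓ b).) -/
import Mathlib

theorem subinterval_local_complement_modular {L : Type*} [Lattice L] [IsModularLattice L]
    (d a x b c y : L)
    (hda : d ≤ a) (hax : a ≤ x) (hxb : x ≤ b) (hbc : b ≤ c)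
    (hdy : d ≤ y) (hyc : y ≤ c)
    (hinf : x ⊓ y = d) (hsup : x ⊔ y = c) :
    a ≤ a ⊔ (y ⊓ b) ∧ a ⊔ (y ⊓ b) ≤ b ∧
      x ⊓ (a ⊔ (y ⊓ b)) = a ∧ x ⊔ (a ⊔ (y ⊓ b)) = b := by
  refine ⟨le_sup_left, sup_le (hax.trans hxb) inf_le_right, ?_, ?_⟩
  · rw [inf_comm, sup_inf_assoc_of_le _ hax, inf_assoc, inf_comm b x, ← inf_assoc,
      inf_comm y x, hinf]
    exact sup_eq_left.mpr (inf_le_left.trans hda)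
  · rw [← sup_assoc, sup_eq_left.mpr hax, ← sup_inf_assoc_of_le _ hxb, hsup]
    exact inf_eq_right.mpr hbc
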